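/- arXiv:1708.03695 — 3 statements merged into one kernel-verified Lean document; each statement's English description precedes it below -/
import Mathlib

section
/- Let ℓ(x) = u(x) · |log|x - c||^α for a C¹ function u with u(c) > 0 and α > 0, defined for x near c (x ≠ c). Then lim_{x → c} (log |Dℓ(x)|) / (ℓ(x) · log(1/|x - c|)) = 0. -/
open Real Filter

/-- Logarithmic order flat critical point: `log |Dℓ(x)| / (ℓ(x) log(1/|x-c|)) → 0` as `x → c`. -/
theorem stmt1 (c : ℝ) (u : ℝ → ℝ) (hu : ContDiff ℝ 1 u) (huc : 0 < u c)
    (α : ℝ) (hα : 0 < α)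
    (ℓ : ℝ → ℝ) (hℓ : ∀ x ≠ c, ℓ x = u x * abs (Real.log (abs (x - c))) ^ α) :
    Tendsto (fun x => Real.log |deriv ℓ x| / (ℓ x * Real.log (1 / |x - c|)))
      (nhdsWithin c {c}ᶜ) (nhds 0) := by
  set A := u c with hA
  set M : ℝ := |deriv u c| + 1 with hM
  set C : ℝ := |α - 1| + 2 with hC
  have hMpos : 0 < M := by positivity
  have hCpos : 0 < C := by positivity
  have hApos : 0 < A := huc
  set K : ℝ := max 1 (max |Real.log (3 * A * α)| |Real.log (A * α / 4)|) with hK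
  set L : ℝ → ℝ := fun x => -Real.log |x - c| with hLdef
  -- |x - c| tends to 0 within (0, ∞)
  have habs : Tendsto (fun x => |x - c|) (nhdsWithin c {c}ᶜ) (nhdsWithin 0 (Set.Ioi 0)) := by
    apply tendsto_nhdsWithin_of_tendsto_nhds_of_eventually_within
    · have h : Tendsto (fun x : ℝ => |x - c|) (nhds c) (nhds 0) := by
        have hcont : Continuous fun x : ℝ => |x - c| :=
          continuous_abs.comp (continuous_id.sub continuous_const)
        simpa using hcont.tendsto c
      exact h.mono_left nhdsWithin_le_nhds
    · filter_upwards [self_mem_nhdsWithin] with x hx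
      exact abs_pos.mpr (sub_ne_zero.mpr hx)
  -- L → ∞
  have hLtop : Tendsto L (nhdsWithin c {c}ᶜ) atTop :=
    tendsto_neg_atBot_atTop.comp (Real.tendsto_log_nhdsGT_zero.comp habs)
  -- |x-c| * L x → 0
  have hmul : Tendsto (fun x => |x - c| * L x) (nhdsWithin c {c}ᶜ) (nhds 0) := by
    have h1 : Tendsto (fun t : ℝ => Real.log t * t) (nhdsWithin 0 (Set.Ioi 0)) (nhds 0) := by
      have := tendsto_log_mul_rpow_nhdsGT_zero (r := 1) one_pos
      simpa using this
    have h2 := (h1.comp habs).neg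
    simp only [neg_zero] at h2
    refine h2.congr fun x => ?_
    simp only [Function.comp_apply, hLdef]
    ring
  -- tendsto of the bounding function
  have hgtend : Tendsto (fun x => (2 * C / A) / (L x) ^ α) (nhdsWithin c {c}ᶜ) (nhds 0) :=
    tendsto_const_nhds.div_atTop ((tendsto_rpow_atTop hα).comp hLtop)
  apply squeeze_zero_norm' _ hgtend
  -- gather eventual facts
  have hne : ∀ᶠ x in nhdsWithin c {c}ᶜ, x ≠ c := self_mem_nhdsWithin
  have hlt1 : ∀ᶠ x in nhdsWithin c {c}ᶜ, |x - c| < 1 :=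
    ((eventually_abs_sub_lt c one_pos).filter_mono nhdsWithin_le_nhds)
  have huev : ∀ᶠ x in nhdsWithin c {c}ᶜ, A / 2 < u x ∧ u x < 2 * A := by
    have h := (hu.continuous.tendsto c).mono_left (nhdsWithin_le_nhds (s := {c}ᶜ))
    exact (h.eventually (eventually_gt_nhds (by linarith))).and
      (h.eventually (eventually_lt_nhds (by linarith)))
  have hu'ev : ∀ᶠ x in nhdsWithin c {c}ᶜ, |deriv u x| < M := by
    have hcont : Continuous (deriv u) := hu.continuous_deriv le_rfl
    have h : Tendsto (fun x => |deriv u x|) (nhdsWithin c {c}ᶜ) (nhds |deriv u c|) :=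
      ((continuous_abs.comp hcont).tendsto c).mono_left nhdsWithin_le_nhds
    exact h.eventually (eventually_lt_nhds (by simp [hM]))
  have hKev : ∀ᶠ x in nhdsWithin c {c}ᶜ, K ≤ L x := hLtop.eventually_ge_atTop K
  have hmulev : ∀ᶠ x in nhdsWithin c {c}ᶜ, |x - c| * L x < A * α / (4 * M) :=
    hmul.eventually (eventually_lt_nhds (by positivity))
  filter_upwards [hne, hlt1, huev, hu'ev, hKev, hmulev] with x hx hx1 hux hu'x hKx hmx
  -- basic facts about this x
  have ht0 : (0:ℝ) < |x - c| := abs_pos.mpr (sub_ne_zero.mpr hx)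
  have hlogneg : Real.log |x - c| < 0 := Real.log_neg ht0 hx1
  have hL0 : 0 < L x := by simp only [hLdef]; linarith
  have hL1 : 1 ≤ L x := le_trans (le_max_left _ _) hKx
  -- derivative computation
  have hderiv : deriv ℓ x =
      deriv u x * (L x) ^ α + u x * (α * (L x) ^ (α - 1) * (-(x - c)⁻¹)) := by
    have hfun : ℓ =ᶠ[nhds x] fun y => u y * (-Real.log (y - c)) ^ α := by
      have hS : IsOpen ({y : ℝ | y ≠ c} ∩ {y : ℝ | |y - c| < 1}) := by
        apply IsOpen.inter
        · exact isOpen_compl_singleton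
        · exact isOpen_lt (continuous_abs.comp (continuous_id.sub continuous_const))
            continuous_const
      have hxS : x ∈ ({y : ℝ | y ≠ c} ∩ {y : ℝ | |y - c| < 1}) := ⟨hx, hx1⟩
      filter_upwards [hS.mem_nhds hxS] with y hy
      have hy0 : (0:ℝ) < |y - c| := abs_pos.mpr (sub_ne_zero.mpr hy.1)
      have habs' : abs (Real.log (abs (y - c))) = -Real.log (y - c) := by
        rw [abs_of_neg (Real.log_neg hy0 hy.2), Real.log_abs]
      rw [hℓ y hy.1, habs']
    have hLx : -Real.log (x - c) = L x := by simp only [hLdef]; rw [Real.log_abs]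
    have hsub : HasDerivAt (fun y : ℝ => y - c) 1 x := (hasDerivAt_id x).sub_const c
    have hlog : HasDerivAt (fun y => Real.log (y - c)) ((x - c)⁻¹) x := by
      have := (Real.hasDerivAt_log (sub_ne_zero.mpr hx)).comp x hsub
      simpa [Function.comp_def] using this
    have hneg : HasDerivAt (fun y => -Real.log (y - c)) (-(x - c)⁻¹) x := hlog.neg
    have hrpow : HasDerivAt (fun y => (-Real.log (y - c)) ^ α)
        (α * (L x) ^ (α - 1) * (-(x - c)⁻¹)) x := by
      have h := (Real.hasDerivAt_rpow_const (x := -Real.log (x - c)) (p := α)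
        (Or.inl (by rw [hLx]; exact ne_of_gt hL0))).comp x hneg
      rw [hLx] at h
      exact h
    have hd : HasDerivAt (fun y => u y * (-Real.log (y - c)) ^ α)
        (deriv u x * (L x) ^ α + u x * (α * (L x) ^ (α - 1) * (-(x - c)⁻¹))) x := by
      have hux' : HasDerivAt u (deriv u x) x := (hu.differentiable one_ne_zero x).hasDerivAt
      have h := hux'.mul hrpow
      rw [hLx] at h
      exact h
    rw [hfun.deriv_eq, hd.deriv]
  set s : ℝ := (L x) ^ (α - 1) / |x - c| with hs
  have hLp1 : (0:ℝ) < (L x) ^ (α - 1) := Real.rpow_pos_of_pos hL0 _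
  have hLpα : (0:ℝ) < (L x) ^ α := Real.rpow_pos_of_pos hL0 _
  have hspos : 0 < s := by positivity
  have hLsplit : (L x) ^ α = (L x) ^ (α - 1) * L x := by
    rw [← Real.rpow_add_one (ne_of_gt hL0) (α - 1)]
    ring_nf
  -- bound |P| ≤ (A α / 4) s
  set P : ℝ := deriv u x * (L x) ^ α with hP
  set Q : ℝ := u x * (α * (L x) ^ (α - 1) * (-(x - c)⁻¹)) with hQ
  have hMLle : M * L x ≤ A * α / 4 / |x - c| := by
    rw [le_div_iff₀ ht0]
    have hMne : M ≠ 0 := ne_of_gt hMpos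
    have hkey : M * (A * α / (4 * M)) = A * α / 4 := by
      field_simp
    have h := mul_lt_mul_of_pos_left hmx hMpos
    rw [hkey] at h
    have hre : M * L x * |x - c| = M * (|x - c| * L x) := by ring
    rw [hre]
    exact le_of_lt h
  have hPle : |P| ≤ A * α / 4 * s := by
    rw [hP, abs_mul, hLsplit, abs_of_pos (mul_pos hLp1 hL0), hs]
    calc |deriv u x| * ((L x) ^ (α - 1) * L x)
        ≤ M * ((L x) ^ (α - 1) * L x) :=
          mul_le_mul_of_nonneg_right (le_of_lt hu'x) (by positivity)
      _ = (M * L x) * (L x) ^ (α - 1) := by ring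
      _ ≤ (A * α / 4 / |x - c|) * (L x) ^ (α - 1) :=
          mul_le_mul_of_nonneg_right hMLle (le_of_lt hLp1)
      _ = A * α / 4 * ((L x) ^ (α - 1) / |x - c|) := by ring
  have hQabs : |Q| = u x * α * s := by
    rw [hQ, abs_mul, abs_mul, abs_mul, abs_neg, abs_inv,
      abs_of_pos (by linarith [hux.1] : (0:ℝ) < u x), abs_of_pos hα, abs_of_pos hLp1, hs]
    ring
  -- bounds on |D|
  have htri : |Q| - |P| ≤ |P + Q| := by
    have h := abs_sub_abs_le_abs_sub Q (-P)
    rw [abs_neg, sub_neg_eq_add] at h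
    calc |Q| - |P| ≤ |Q + P| := h
      _ = |P + Q| := by rw [add_comm]
  have h1Q : A / 2 * α * s ≤ u x * α * s :=
    mul_le_mul_of_nonneg_right
      (mul_le_mul_of_nonneg_right (le_of_lt hux.1) (le_of_lt hα)) (le_of_lt hspos)
  have h2Q : u x * α * s ≤ 2 * A * α * s :=
    mul_le_mul_of_nonneg_right
      (mul_le_mul_of_nonneg_right (le_of_lt hux.2) (le_of_lt hα)) (le_of_lt hspos)
  have hDlow : A * α / 4 * s ≤ |deriv ℓ x| := by
    rw [hderiv]
    rw [hQabs] at htri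
    linarith [htri, h1Q, hPle]
  have hDhigh : |deriv ℓ x| ≤ 3 * A * α * s := by
    rw [hderiv]
    calc |P + Q| ≤ |P| + |Q| := abs_add_le _ _
      _ ≤ A * α / 4 * s + u x * α * s := by rw [hQabs]; linarith [hPle]
      _ ≤ 3 * A * α * s := by linarith [h2Q]
  have hDpos : 0 < |deriv ℓ x| := lt_of_lt_of_le (by positivity) hDlow
  -- log bounds
  have hlogs : Real.log s = (α - 1) * Real.log (L x) + L x := by
    rw [hs, Real.log_div (ne_of_gt hLp1) (ne_of_gt ht0), Real.log_rpow hL0]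
    simp only [hLdef]
    ring
  have hlogL0 : 0 ≤ Real.log (L x) := Real.log_nonneg hL1
  have hlogLle : Real.log (L x) ≤ L x :=
    le_trans (Real.log_le_sub_one_of_pos hL0) (by linarith)
  have hK1 : |Real.log (3 * A * α)| ≤ L x :=
    le_trans (le_trans (le_max_left _ _) (le_max_right _ _)) hKx
  have hK2 : |Real.log (A * α / 4)| ≤ L x :=
    le_trans (le_trans (le_max_right _ _) (le_max_right _ _)) hKx
  have hαterm : |(α - 1) * Real.log (L x)| ≤ |α - 1| * L x := by
    rw [abs_mul]
    exact mul_le_mul_of_nonneg_left (by rwa [abs_of_nonneg hlogL0]) (abs_nonneg _)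
  have hnumub : Real.log |deriv ℓ x| ≤ C * L x := by
    calc Real.log |deriv ℓ x| ≤ Real.log (3 * A * α * s) :=
          Real.log_le_log hDpos hDhigh
      _ = Real.log (3 * A * α) + Real.log s :=
          Real.log_mul (by positivity) (ne_of_gt hspos)
      _ = Real.log (3 * A * α) + ((α - 1) * Real.log (L x) + L x) := by rw [hlogs]
      _ ≤ L x + (|α - 1| * L x + L x) := by
          have h1 : Real.log (3 * A * α) ≤ L x := le_trans (le_abs_self _) hK1
          have h2 : (α - 1) * Real.log (L x) ≤ |α - 1| * L x :=
            le_trans (le_abs_self _) hαterm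
          linarith
      _ = C * L x := by rw [hC]; ring
  have hnumlb : -(C * L x) ≤ Real.log |deriv ℓ x| := by
    calc -(C * L x) ≤ Real.log (A * α / 4) + ((α - 1) * Real.log (L x) + L x) := by
          have h1 : -(L x) ≤ Real.log (A * α / 4) := by
            have := neg_abs_le (Real.log (A * α / 4))
            linarith [hK2]
          have h2 : -(|α - 1| * L x) ≤ (α - 1) * Real.log (L x) := by
            have := neg_abs_le ((α - 1) * Real.log (L x))
            linarith [hαterm]
          have h3 : 0 < L x := hL0
          rw [hC]
          clear_value L A
          linarith only [h1, h2, h3]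
      _ = Real.log (A * α / 4 * s) := by
          rw [Real.log_mul (by positivity) (ne_of_gt hspos), hlogs]
      _ ≤ Real.log |deriv ℓ x| := Real.log_le_log (by positivity) hDlow
  have hnumabs : abs (Real.log (abs (deriv ℓ x))) ≤ C * L x := abs_le.mpr ⟨hnumlb, hnumub⟩
  -- denominator
  have hℓx : ℓ x = u x * (L x) ^ α := by
    rw [hℓ x hx, abs_of_neg hlogneg]
  have hlog1 : Real.log (1 / |x - c|) = L x := by
    rw [one_div, Real.log_inv]
  have hden : ℓ x * Real.log (1 / |x - c|) = u x * (L x) ^ α * L x := by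
    rw [hℓx, hlog1]
  have hdenlb : A / 2 * (L x) ^ α * L x ≤ ℓ x * Real.log (1 / |x - c|) := by
    rw [hden]
    exact mul_le_mul_of_nonneg_right
      (mul_le_mul_of_nonneg_right (le_of_lt hux.1) (le_of_lt hLpα)) (le_of_lt hL0)
  have hdenpos : 0 < ℓ x * Real.log (1 / |x - c|) :=
    lt_of_lt_of_le (by positivity) hdenlb
  -- final bound
  rw [Real.norm_eq_abs, abs_div, abs_of_pos hdenpos]
  calc abs (Real.log (abs (deriv ℓ x))) / (ℓ x * Real.log (1 / |x - c|))
      ≤ (C * L x) / (A / 2 * (L x) ^ α * L x) :=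
        div_le_div₀ (by positivity) hnumabs (by positivity) hdenlb
    _ = 2 * C / A / (L x) ^ α := by
        field_simp
end

section
/- Let ℓ(x) = |x - c|^{-v(x)} with v C¹ and v(c) > 0. Then |x - c|^{ℓ(x)} · Dℓ(x) · log|x - c| → 0 as x → c. -/
open Real Filter

/-- For `ℓ(x) = |x-c|^{-v(x)}` with `v` C¹ and `v(c) > 0`,
`|x-c|^{ℓ(x)} · Dℓ(x) · log|x-c| → 0` as `x → c`. -/
theorem stmt2 (c : ℝ) (v : ℝ → ℝ) (hv : ContDiff ℝ 1 v) (hvc : 0 < v c)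
    (ℓ : ℝ → ℝ) (hℓ : ∀ x ≠ c, ℓ x = |x - c| ^ (-(v x))) :
    Tendsto (fun x => |x - c| ^ (ℓ x) * deriv ℓ x * Real.log |x - c|)
      (nhdsWithin c {c}ᶜ) (nhds 0) := by
  set a : ℝ := v c / 2 with ha_def
  set M : ℝ := |v c| + |deriv v c| + 1 with hM_def
  have ha : 0 < a := by positivity
  have hM : 0 < M := by positivity
  set g : ℝ → ℝ := fun x => Real.exp (-(v x) * Real.log (x - c)) with hg_def
  have hg : ∀ y, y ≠ c → ℓ y = g y := by
    intro y hy
    rw [hℓ y hy, Real.rpow_def_of_pos (abs_pos.2 (sub_ne_zero.2 hy)), Real.log_abs,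
      mul_comm]
  -- tendsto facts
  have hta : Tendsto (fun x => |x - c|) (nhdsWithin c {c}ᶜ) (nhdsWithin 0 (Set.Ioi 0)) := by
    apply tendsto_nhdsWithin_of_tendsto_nhds_of_eventually_within
    · have hc : Continuous (fun x : ℝ => |x - c|) := by fun_prop
      have h1 : Tendsto (fun x : ℝ => |x - c|) (nhds c) (nhds 0) := by
        simpa using hc.tendsto c
      exact h1.mono_left nhdsWithin_le_nhds
    · filter_upwards [self_mem_nhdsWithin] with x hx
      exact abs_pos.2 (sub_ne_zero.2 hx)
  have hlog : Tendsto (fun x => Real.log |x - c|) (nhdsWithin c {c}ᶜ) atBot :=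
    Real.tendsto_log_nhdsGT_zero.comp hta
  have hE6t : Tendsto (fun x => Real.exp (-a * Real.log |x - c|)) (nhdsWithin c {c}ᶜ) atTop := by
    apply Real.tendsto_exp_atTop.comp
    exact (tendsto_const_mul_atTop_of_neg (by linarith)).2 hlog
  have hQ : Tendsto (fun u => u * ((M * |Real.log u| + M) * |Real.log u|))
      (nhdsWithin 0 (Set.Ioi 0)) (nhds 0) := by
    have hhalf : Tendsto (fun u : ℝ => Real.log u * u ^ ((2:ℝ)⁻¹))
        (nhdsWithin 0 (Set.Ioi 0)) (nhds 0) :=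
      tendsto_log_mul_rpow_nhdsGT_zero (by norm_num)
    have hone : Tendsto (fun u : ℝ => Real.log u * u) (nhdsWithin 0 (Set.Ioi 0)) (nhds 0) := by
      have h := tendsto_log_mul_rpow_nhdsGT_zero (r := 1) one_pos
      refine h.congr' ?_
      filter_upwards [self_mem_nhdsWithin] with u hu
      rw [Real.rpow_one]
    have hcomb : Tendsto (fun u : ℝ =>
        M * ((Real.log u * u ^ ((2:ℝ)⁻¹)) * (Real.log u * u ^ ((2:ℝ)⁻¹))) +
          M * (-(Real.log u * u))) (nhdsWithin 0 (Set.Ioi 0)) (nhds 0) := by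
      have := ((hhalf.mul hhalf).const_mul M).add ((hone.neg).const_mul M)
      simpa using this
    refine hcomb.congr' ?_
    filter_upwards [self_mem_nhdsWithin,
      eventually_nhdsWithin_of_eventually_nhds (eventually_lt_nhds one_pos)] with u hu0 hu1
    have hu0' : (0:ℝ) < u := hu0
    have hlogneg : Real.log u < 0 := Real.log_neg hu0' hu1
    have hs : (u ^ ((2:ℝ)⁻¹)) * (u ^ ((2:ℝ)⁻¹)) = u := by
      rw [← Real.rpow_add hu0']
      norm_num
    rw [abs_of_neg hlogneg]
    linear_combination (M * Real.log u * Real.log u) * hs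
  have hQ' : Tendsto (fun x => |x - c| * ((M * abs (Real.log |x - c|) + M) * abs (Real.log |x - c|)))
      (nhdsWithin c {c}ᶜ) (nhds 0) := hQ.comp hta
  -- eventual hypotheses
  have hvcont : Continuous v := hv.continuous
  have hv'cont : Continuous (deriv v) := hv.continuous_deriv le_rfl
  have E2 : ∀ᶠ x in nhdsWithin c {c}ᶜ, |x - c| < 1 := by
    apply eventually_nhdsWithin_of_eventually_nhds
    have hc : Continuous (fun x : ℝ => |x - c|) := by fun_prop
    have h1 : Tendsto (fun x : ℝ => |x - c|) (nhds c) (nhds 0) := by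
      simpa using hc.tendsto c
    exact h1.eventually (eventually_lt_nhds one_pos)
  have E3 : ∀ᶠ x in nhdsWithin c {c}ᶜ, a ≤ v x :=
    eventually_nhdsWithin_of_eventually_nhds
      ((hvcont.tendsto c).eventually (eventually_ge_nhds (by linarith)))
  have E4 : ∀ᶠ x in nhdsWithin c {c}ᶜ, v x ≤ M := by
    apply eventually_nhdsWithin_of_eventually_nhds
    apply (hvcont.tendsto c).eventually (eventually_le_nhds ?_)
    rw [hM_def]
    linarith [le_abs_self (v c), abs_nonneg (deriv v c)]
  have E5 : ∀ᶠ x in nhdsWithin c {c}ᶜ, |deriv v x| ≤ M := by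
    apply eventually_nhdsWithin_of_eventually_nhds
    apply (hv'cont.abs.tendsto c).eventually (eventually_le_nhds ?_)
    rw [hM_def]
    linarith [abs_nonneg (v c)]
  have E6 : ∀ᶠ x in nhdsWithin c {c}ᶜ, M + 3 ≤ Real.exp (-a * Real.log |x - c|) :=
    hE6t.eventually (eventually_ge_atTop (M + 3))
  have E7 : ∀ᶠ x in nhdsWithin c {c}ᶜ,
      |x - c| * ((M * abs (Real.log |x - c|) + M) * abs (Real.log |x - c|)) ≤ 1 :=
    hQ'.eventually (eventually_le_nhds one_pos)
  -- squeeze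
  rw [tendsto_zero_iff_abs_tendsto_zero]
  apply squeeze_zero' (Eventually.of_forall fun x => abs_nonneg _)
    ?_ (hta.mono_right nhdsWithin_le_nhds)
  filter_upwards [self_mem_nhdsWithin, E2, E3, E4, E5, E6, E7]
    with x hx' ht1 hvxa hvxM hdvM hexpa hsmall
  have hx : x ≠ c := hx'
  have hne : x - c ≠ 0 := sub_ne_zero.2 hx
  set t : ℝ := |x - c| with ht_def
  set L : ℝ := Real.log (x - c) with hL_def
  have ht0 : 0 < t := abs_pos.2 hne
  have hLt : Real.log t = L := Real.log_abs _
  have hL0 : L < 0 := by rw [← hLt]; exact Real.log_neg ht0 ht1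
  have hnL : 0 ≤ -L := by linarith
  have hexpL : Real.exp L = t := by rw [← hLt, Real.exp_log ht0]
  -- derivative computation
  have hDv : HasDerivAt v (deriv v x) x := (hv.differentiable one_ne_zero x).hasDerivAt
  have hsub : HasDerivAt (fun y : ℝ => y - c) 1 x := (hasDerivAt_id x).sub_const c
  have hlg : HasDerivAt (fun y : ℝ => Real.log (y - c)) (1 / (x - c)) x := hsub.log hne
  have hmul : HasDerivAt (fun y => -(v y) * Real.log (y - c))
      (-(deriv v x) * L + -(v x) * (1 / (x - c))) x := hDv.neg.mul hlg
  have hgd : HasDerivAt g (g x * (-(deriv v x) * L + -(v x) * (1 / (x - c)))) x := hmul.exp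
  have hdℓ : deriv ℓ x = g x * (-(deriv v x) * L + -(v x) * (1 / (x - c))) := by
    have hev : ℓ =ᶠ[nhds x] g := by
      filter_upwards [eventually_ne_nhds hx] with y hy
      exact hg y hy
    rw [hev.deriv_eq, hgd.deriv]
  have hgxpos : 0 < g x := Real.exp_pos _
  have hvx0 : 0 < v x := lt_of_lt_of_le ha hvxa
  have hgx_eq : g x = Real.exp (-(v x) * L) := by
    simp only [hg_def, hL_def]
  -- bounds on g x
  have hgxle : g x ≤ Real.exp (M * -L) := by
    rw [hgx_eq]
    apply Real.exp_le_exp.2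
    nlinarith [mul_le_mul_of_nonneg_right hvxM hnL]
  have hexpa' : M + 3 ≤ Real.exp (-a * L) := by rwa [hLt] at hexpa
  have hgxge : M + 3 ≤ g x := by
    rw [hgx_eq]
    refine hexpa'.trans (Real.exp_le_exp.2 ?_)
    nlinarith [mul_le_mul_of_nonneg_right hvxa hnL]
  -- bound on the exp factor
  have hP : Real.exp (L * g x) ≤ Real.exp ((M + 3) * L) := by
    apply Real.exp_le_exp.2
    calc L * g x ≤ L * (M + 3) := mul_le_mul_of_nonpos_left hgxge hL0.le
      _ = (M + 3) * L := mul_comm _ _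
  -- bound on derivative bracket
  set B : ℝ := -(deriv v x) * L + -(v x) * (1 / (x - c)) with hB_def
  clear_value a M g t L B
  have htne : t ≠ 0 := ht0.ne'
  have hinv : 1 ≤ 1 / t := by rw [le_div_iff₀ ht0]; linarith
  have hD : |B| ≤ (M * -L + M) / t := by
    have h1 : |B| ≤ |deriv v x| * -L + v x * (1 / t) := by
      rw [hB_def]
      refine (abs_add_le _ _).trans (le_of_eq ?_)
      rw [abs_mul, abs_mul, abs_neg, abs_neg, abs_of_neg hL0, abs_of_pos hvx0,
        abs_div, abs_one, ht_def]
    refine h1.trans ?_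
    have h2 : |deriv v x| * -L + v x * (1 / t) ≤ (M * -L) * (1 / t) + M * (1 / t) := by
      have hi0 : (0:ℝ) < 1 / t := by positivity
      have ha1 : |deriv v x| * -L ≤ M * -L := mul_le_mul_of_nonneg_right hdvM hnL
      have ha2 : M * -L ≤ (M * -L) * (1 / t) :=
        le_mul_of_one_le_right (by positivity) hinv
      have ha3 : v x * (1 / t) ≤ M * (1 / t) := mul_le_mul_of_nonneg_right hvxM hi0.le
      linarith
    refine h2.trans (le_of_eq ?_)
    field_simp
  -- main estimate
  rw [Real.rpow_def_of_pos ht0, hLt, hg x hx, hdℓ]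
  have habs : |Real.exp (L * g x) * (g x * B) * L| =
      Real.exp (L * g x) * (g x * |B|) * -L := by
    rw [abs_mul, abs_mul, abs_mul, abs_of_pos (Real.exp_pos _), abs_of_pos hgxpos,
      abs_of_neg hL0]
  rw [habs]
  have h7 : t * ((M * -L + M) * -L) ≤ 1 := by
    rwa [hLt, abs_of_neg hL0] at hsmall
  calc Real.exp (L * g x) * (g x * |B|) * -L
      ≤ Real.exp ((M + 3) * L) * (Real.exp (M * -L) * ((M * -L + M) / t)) * -L := by
        have hDb : 0 ≤ (M * -L + M) / t := by positivity
        gcongr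
    _ = t * (t * ((M * -L + M) * -L)) := by
        have h3 : Real.exp ((M + 3) * L) * Real.exp (M * -L) = t * t * t := by
          rw [← Real.exp_add, show (M + 3) * L + M * -L = L + L + L by ring,
            Real.exp_add, Real.exp_add, hexpL]
        rw [show Real.exp ((M + 3) * L) * (Real.exp (M * -L) * ((M * -L + M) / t)) * -L =
          (Real.exp ((M + 3) * L) * Real.exp (M * -L)) * ((M * -L + M) / t * -L) by ring, h3]
        field_simp
    _ ≤ t * 1 := mul_le_mul_of_nonneg_left h7 ht0.le
    _ = t := mul_one t
end

section
/- For the family f_b(x) = -2^{2^b} |x - 1/2|^{|x-1/2|^{-b}} + 1 (for x ≠ 1/2, f_b(1/2) = 1), the integral ∫₀¹ log|Df_b(x)| dx is finite (i.e. > -∞) if and only if b < 1. -/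
open Real MeasureTheory Set

lemma log_abs_le {ε u : ℝ} (hε : 0 < ε) (hu : 0 < u) (hu1 : u ≤ 1) :
    |Real.log u| ≤ ε⁻¹ * u ^ (-ε) := by
  rw [abs_of_nonpos (Real.log_nonpos hu.le hu1)]
  have h1 : Real.log (u ^ (-ε)) ≤ u ^ (-ε) - 1 :=
    Real.log_le_sub_one_of_pos (Real.rpow_pos_of_pos hu _)
  rw [Real.log_rpow hu] at h1
  have h2 : (0:ℝ) < u ^ (-ε) := Real.rpow_pos_of_pos hu _
  have h3 : -ε * Real.log u ≤ u ^ (-ε) := by linarith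
  have h4 : -Real.log u = ε⁻¹ * (-ε * Real.log u) := by field_simp
  rw [h4, mul_comm]
  have := inv_pos.2 hε
  nlinarith

lemma keyInt {c : ℝ} (hc : c < 1) :
    IntegrableOn (fun x => |x - 1/2| ^ (-c)) (Icc (0:ℝ) 1) volume := by
  have h0 : IntervalIntegrable (fun t : ℝ => t ^ (-c)) volume 0 (1/2) :=
    intervalIntegral.intervalIntegrable_rpow' (by linarith)
  have hR : IntegrableOn (fun x => |x - 1/2| ^ (-c)) (Ioc (1/2 : ℝ) 1) volume := by
    have h1 := h0.comp_sub_right (1/2)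
    norm_num at h1
    rw [intervalIntegrable_iff_integrableOn_Ioc_of_le (by norm_num)] at h1
    refine h1.congr_fun (fun x hx => ?_) measurableSet_Ioc
    rw [abs_of_pos (by linarith [hx.1] : (0:ℝ) < x - 1/2)]
  have hL : IntegrableOn (fun x => |x - 1/2| ^ (-c)) (Icc (0:ℝ) (1/2)) volume := by
    have h1 := (h0.comp_sub_left (1/2)).symm
    norm_num at h1
    rw [intervalIntegrable_iff_integrableOn_Ioc_of_le (by norm_num)] at h1
    rw [integrableOn_Icc_iff_integrableOn_Ioc]
    refine h1.congr_fun (fun x hx => ?_) measurableSet_Ioc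
    rw [abs_of_nonpos (by linarith [hx.2] : x - 1/2 ≤ 0)]
    ring_nf
  have hU : Icc (0:ℝ) 1 = Icc 0 (1/2) ∪ Ioc (1/2) 1 :=
    (Icc_union_Ioc_eq_Icc (by norm_num) (by norm_num)).symm
  rw [hU]
  exact hL.union hR

lemma intOn_bound {g : ℝ → ℝ} (hg : AEStronglyMeasurable g (volume.restrict (Icc (0:ℝ) 1)))
    {M c : ℝ} (hc : c < 1)
    (h : ∀ x ∈ Icc (0:ℝ) 1, |g x| ≤ M * |x - 1/2| ^ (-c)) :
    IntegrableOn g (Icc (0:ℝ) 1) volume := by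
  refine Integrable.mono' ((keyInt hc).const_mul M) hg ?_
  exact (ae_restrict_iff' measurableSet_Icc).2 (Filter.Eventually.of_forall fun x hx => by
    simpa [Real.norm_eq_abs] using h x hx)

lemma keyNot {b : ℝ} (hb1 : 1 ≤ b) :
    ¬ IntegrableOn (fun x => |x - 1/2| ^ (-b) * Real.log |x - 1/2|) (Icc (0:ℝ) 1) volume := by
  intro h
  have h1 : IntegrableOn (fun x => (x - 1/2) ^ (-b) * Real.log (x - 1/2))
      (Ioc (1/2:ℝ) 1) volume := by
    refine ((h.mono_set ?_).congr_fun (fun x hx => ?_) measurableSet_Ioc)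
    · exact (Ioc_subset_Icc_self).trans (Icc_subset_Icc (by norm_num) le_rfl)
    · beta_reduce; rw [abs_of_pos (by linarith [hx.1] : (0:ℝ) < x - 1/2)]
  have h2 : IntervalIntegrable (fun x => (x - 1/2) ^ (-b) * Real.log (x - 1/2))
      volume (1/2) 1 := (intervalIntegrable_iff_integrableOn_Ioc_of_le (by norm_num)).2 h1
  have h3 := h2.comp_add_right (1/2)
  simp only [add_sub_cancel_right] at h3
  norm_num at h3
  rw [intervalIntegrable_iff_integrableOn_Ioc_of_le (by norm_num)] at h3
  have h4 : IntegrableOn (fun x : ℝ => x⁻¹) (Ioc (0:ℝ) (1/2)) volume := by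
    refine Integrable.mono' (h3.norm.const_mul ((Real.log 2)⁻¹))
      ((measurable_inv).aestronglyMeasurable) ?_
    refine (ae_restrict_iff' measurableSet_Ioc).2 (Filter.Eventually.of_forall fun x hx => ?_)
    have hx0 : (0:ℝ) < x := hx.1
    have hx1 : x ≤ 1/2 := hx.2
    have hlog : Real.log x ≤ -Real.log 2 := by
      rw [← Real.log_inv]
      exact Real.log_le_log (by positivity) (by rw [show ((2:ℝ))⁻¹ = 1/2 by norm_num]; exact hx1)
    have hlog2 : (0:ℝ) < Real.log 2 := Real.log_pos (by norm_num)
    have hrp : x ^ (-1:ℝ) ≤ x ^ (-b) :=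
      Real.rpow_le_rpow_of_exponent_ge hx0 (by linarith) (by linarith)
    rw [Real.rpow_neg_one] at hrp
    have hxinv : (0:ℝ) < x⁻¹ := by positivity
    rw [Real.norm_eq_abs, abs_of_pos hxinv, Real.norm_eq_abs, abs_mul,
      abs_of_pos (Real.rpow_pos_of_pos hx0 _), abs_of_nonpos (by linarith : Real.log x ≤ 0)]
    have h5 : x⁻¹ * Real.log 2 ≤ x ^ (-b) * -Real.log x := by
      calc x⁻¹ * Real.log 2 ≤ x ^ (-b) * Real.log 2 := by nlinarith
        _ ≤ x ^ (-b) * -Real.log x := by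
            have := Real.rpow_pos_of_pos hx0 (-b); nlinarith
    calc x⁻¹ = (Real.log 2)⁻¹ * (x⁻¹ * Real.log 2) := by field_simp
      _ ≤ (Real.log 2)⁻¹ * (x ^ (-b) * -Real.log x) := by
          have := inv_pos.2 hlog2; nlinarith
  have h5 : ¬ IntegrableOn (fun x : ℝ => x⁻¹) (Ioc (0:ℝ) (1/2)) volume := by
    intro hcon
    have h6 := hcon.mono_set (Ioo_subset_Ioc_self : Ioo (0:ℝ) (1/2) ⊆ Ioc 0 (1/2))
    have h7 : (fun x : ℝ => x⁻¹) = fun x : ℝ => x ^ (-1:ℝ) := by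
      funext x; rw [Real.rpow_neg_one]
    rw [h7, intervalIntegral.integrableOn_Ioo_rpow_iff (by norm_num)] at h6
    linarith
  exact h5 h4

lemma hasDeriv_right {b C : ℝ} {f : ℝ → ℝ}
    (hf : ∀ x ≠ (1/2:ℝ), f x = -C * |x - 1/2| ^ (|x - 1/2| ^ (-b)) + 1)
    {x : ℝ} (hx : (1/2:ℝ) < x) :
    HasDerivAt f (-C * (Real.exp ((x - 1/2) ^ (-b) * Real.log (x - 1/2)) *
      ((-b * (x - 1/2) ^ (-b - 1)) * Real.log (x - 1/2)
        + (x - 1/2) ^ (-b) * (x - 1/2)⁻¹))) x := by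
  have hu : (0:ℝ) < x - 1/2 := by linarith
  have h1 : HasDerivAt (fun y : ℝ => y - 1/2) 1 x := (hasDerivAt_id x).sub_const _
  have h2 : HasDerivAt (fun y : ℝ => (y - 1/2) ^ (-b)) (-b * (x - 1/2) ^ (-b - 1)) x := by
    have := (Real.hasDerivAt_rpow_const (p := -b) (Or.inl hu.ne')).comp x h1
    simpa [sub_eq_add_neg, Function.comp_def] using this
  have h3 : HasDerivAt (fun y : ℝ => Real.log (y - 1/2)) (x - 1/2)⁻¹ x := by
    simpa [Function.comp_def] using (Real.hasDerivAt_log hu.ne').comp x h1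
  have h4 := h2.mul h3
  have h5 := h4.exp
  have h6 := (h5.const_mul (-C)).add_const 1
  refine h6.congr_of_eventuallyEq ?_
  filter_upwards [Ioi_mem_nhds hx] with y hy
  have hy' : (0:ℝ) < y - 1/2 := by simpa [Set.mem_Ioi] using by linarith [mem_Ioi.1 hy]
  rw [hf y (by intro hc; rw [hc] at hy'; norm_num at hy'),
    abs_of_pos hy', Real.rpow_def_of_pos hy', mul_comm (Real.log (y - 1/2))]
  rfl

lemma hasDeriv_left {b C : ℝ} {f : ℝ → ℝ}
    (hf : ∀ x ≠ (1/2:ℝ), f x = -C * |x - 1/2| ^ (|x - 1/2| ^ (-b)) + 1)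
    {x : ℝ} (hx : x < (1/2:ℝ)) :
    HasDerivAt f (-C * (Real.exp ((1/2 - x) ^ (-b) * Real.log (1/2 - x)) *
      ((-b * (1/2 - x) ^ (-b - 1) * -1) * Real.log (1/2 - x)
        + (1/2 - x) ^ (-b) * ((1/2 - x)⁻¹ * -1)))) x := by
  have hu : (0:ℝ) < 1/2 - x := by linarith
  have h1 : HasDerivAt (fun y : ℝ => 1/2 - y) (-1) x := by
    simpa using (hasDerivAt_id x).const_sub (1/2:ℝ)
  have h2 : HasDerivAt (fun y : ℝ => (1/2 - y) ^ (-b)) (-b * (1/2 - x) ^ (-b - 1) * -1) x := by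
    have := (Real.hasDerivAt_rpow_const (p := -b) (Or.inl hu.ne')).comp x h1
    simpa [sub_eq_add_neg, Function.comp_def] using this
  have h3 : HasDerivAt (fun y : ℝ => Real.log (1/2 - y)) ((1/2 - x)⁻¹ * -1) x := by
    simpa [Function.comp_def] using (Real.hasDerivAt_log hu.ne').comp x h1
  have h4 := h2.mul h3
  have h5 := h4.exp
  have h6 := (h5.const_mul (-C)).add_const 1
  refine h6.congr_of_eventuallyEq ?_
  filter_upwards [Iio_mem_nhds hx] with y hy
  have hy' : (0:ℝ) < 1/2 - y := by linarith [mem_Iio.1 hy]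
  rw [hf y (by intro hc; rw [hc] at hy'; norm_num at hy'),
    abs_of_neg (by linarith : y - 1/2 < 0), show -(y - 1/2) = 1/2 - y by ring,
    Real.rpow_def_of_pos hy', mul_comm (Real.log (1/2 - y))]
  rfl

lemma log_abs_deriv {b C : ℝ} (hb : 0 < b) (hC : 0 < C) {f : ℝ → ℝ}
    (hf : ∀ x ≠ (1/2:ℝ), f x = -C * |x - 1/2| ^ (|x - 1/2| ^ (-b)) + 1)
    {x : ℝ} (hx : x ≠ (1/2:ℝ)) (hu1 : |x - 1/2| < 1) :
    Real.log |deriv f x| = Real.log C + |x - 1/2| ^ (-b) * Real.log |x - 1/2|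
      + (-b - 1) * Real.log |x - 1/2| + Real.log (1 - b * Real.log |x - 1/2|) := by
  have hu0 : x - 1/2 ≠ 0 := sub_ne_zero.2 hx
  rcases lt_or_gt_of_ne hx with h | h
  · have hd := (hasDeriv_left hf h).deriv
    have habs : |x - 1/2| = 1/2 - x := by rw [abs_of_neg (by linarith : x - 1/2 < 0)]; ring
    rw [habs] at hu1 ⊢
    rw [hd]
    set u := 1/2 - x with hu_def
    have hupos : (0:ℝ) < u := by rw [hu_def]; linarith
    have hlog : Real.log u < 0 := Real.log_neg hupos hu1
    have hQ : (0:ℝ) < 1 - b * Real.log u := by nlinarith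
    have hE : (0:ℝ) < Real.exp (u ^ (-b) * Real.log u) := Real.exp_pos _
    have hP : (0:ℝ) < u ^ (-b - 1) := Real.rpow_pos_of_pos hupos _
    have hmul : u ^ (-b) * u⁻¹ = u ^ (-b - 1) := by
      rw [← Real.rpow_neg_one u, ← Real.rpow_add hupos]; ring_nf
    have key : -C * (Real.exp (u ^ (-b) * Real.log u) *
        ((-b * u ^ (-b - 1) * -1) * Real.log u + u ^ (-b) * (u⁻¹ * -1)))
        = C * (Real.exp (u ^ (-b) * Real.log u) * (u ^ (-b - 1) * (1 - b * Real.log u))) := by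
      rw [show u ^ (-b) * (u⁻¹ * -1) = -(u ^ (-b - 1)) from by rw [← hmul]; ring]
      ring
    rw [key, abs_of_pos (by positivity)]
    rw [Real.log_mul hC.ne' (by positivity), Real.log_mul hE.ne' (by positivity),
      Real.log_mul hP.ne' hQ.ne', Real.log_exp, Real.log_rpow hupos]
    ring
  · have hd := (hasDeriv_right hf h).deriv
    have habs : |x - 1/2| = x - 1/2 := abs_of_pos (by linarith : (0:ℝ) < x - 1/2)
    rw [habs] at hu1 ⊢
    rw [hd]
    set u := x - 1/2 with hu_def
    have hupos : (0:ℝ) < u := by rw [hu_def]; linarith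
    have hlog : Real.log u < 0 := Real.log_neg hupos hu1
    have hQ : (0:ℝ) < 1 - b * Real.log u := by nlinarith
    have hE : (0:ℝ) < Real.exp (u ^ (-b) * Real.log u) := Real.exp_pos _
    have hP : (0:ℝ) < u ^ (-b - 1) := Real.rpow_pos_of_pos hupos _
    have hmul : u ^ (-b) * u⁻¹ = u ^ (-b - 1) := by
      rw [← Real.rpow_neg_one u, ← Real.rpow_add hupos]; ring_nf
    have key : -C * (Real.exp (u ^ (-b) * Real.log u) *
        ((-b * u ^ (-b - 1)) * Real.log u + u ^ (-b) * u⁻¹))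
        = -(C * (Real.exp (u ^ (-b) * Real.log u) * (u ^ (-b - 1) * (1 - b * Real.log u)))) := by
      rw [hmul]; ring
    rw [key, abs_neg, abs_of_pos (by positivity)]
    rw [Real.log_mul hC.ne' (by positivity), Real.log_mul hE.ne' (by positivity),
      Real.log_mul hP.ne' hQ.ne', Real.log_exp, Real.log_rpow hupos]
    ring

/-- For the family `f_b(x) = -2^{2^b}|x-1/2|^{|x-1/2|^{-b}} + 1`, the integral
`∫₀¹ log|Df_b(x)| dx` is finite if and only if `b < 1`. -/
theorem stmt4 (b : ℝ) (hb : 0 < b) (f : ℝ → ℝ)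
    (hf : ∀ x ≠ (1/2 : ℝ),
      f x = -(2:ℝ) ^ ((2:ℝ) ^ b) * |x - 1/2| ^ (|x - 1/2| ^ (-b)) + 1)
    (hfc : f (1/2) = 1) :
    IntegrableOn (fun x => Real.log |deriv f x|) (Set.Icc (0:ℝ) 1) volume ↔ b < 1 := by
  set C := (2:ℝ) ^ ((2:ℝ) ^ b) with hC_def
  have hC : (0:ℝ) < C := Real.rpow_pos_of_pos (by norm_num) _
  set F : ℝ → ℝ := fun x => Real.log C + |x - 1/2| ^ (-b) * Real.log |x - 1/2|
      + (-b - 1) * Real.log |x - 1/2| + Real.log (1 - b * Real.log |x - 1/2|) with hF_def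
  -- measurability facts
  have mlog : Measurable (fun x : ℝ => Real.log |x - 1/2|) :=
    Real.measurable_log.comp ((measurable_id.sub_const _).abs)
  have mpow : Measurable (fun x : ℝ => |x - 1/2| ^ (-b)) := by
    have heq : (fun x : ℝ => |x - 1/2| ^ (-b))
        = fun x => if x = (1/2:ℝ) then 0 else Real.exp (Real.log |x - 1/2| * (-b)) := by
      funext x
      split_ifs with h
      · simp [h, Real.zero_rpow (neg_ne_zero.2 hb.ne')]
      · rw [Real.rpow_def_of_pos (abs_pos.2 (sub_ne_zero.2 h))]
    rw [heq]
    exact Measurable.ite (measurableSet_eq) measurable_const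
      (Real.measurable_exp.comp (mlog.mul_const _))
  have mT : Measurable (fun x : ℝ => |x - 1/2| ^ (-b) * Real.log |x - 1/2|) := mpow.mul mlog
  have mG : Measurable (fun x : ℝ => Real.log (1 - b * Real.log |x - 1/2|)) :=
    Real.measurable_log.comp (measurable_const.sub (mlog.const_mul b))
  -- a.e. equality
  have hae : (fun x => Real.log |deriv f x|) =ᵐ[volume.restrict (Icc (0:ℝ) 1)] F := by
    have h1 : ∀ᵐ x ∂volume.restrict (Icc (0:ℝ) 1), x ≠ (1/2:ℝ) := by
      refine ae_restrict_of_ae ?_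
      have hset : {x : ℝ | ¬ x ≠ (1/2:ℝ)} = {(1/2:ℝ)} := by ext y; simp
      rw [ae_iff, hset]
      exact Real.volume_singleton
    filter_upwards [h1, ae_restrict_mem measurableSet_Icc] with x hx hxI
    have hlt : |x - 1/2| < 1 := by
      rw [abs_lt]; constructor <;> linarith [hxI.1, hxI.2]
    exact log_abs_deriv hb hC hf hx hlt
  -- integrable pieces
  have habs_le : ∀ x ∈ Icc (0:ℝ) 1, |x - 1/2| ≤ 1 := by
    intro x hx
    rw [abs_le]; constructor <;> linarith [hx.1, hx.2]
  have boundL : ∀ x ∈ Icc (0:ℝ) 1, abs (Real.log |x - 1/2|) ≤ 2 * |x - 1/2| ^ (-(2⁻¹:ℝ)) := by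
    intro x hx
    by_cases hx2 : x = (1/2:ℝ)
    · simp [hx2, Real.zero_rpow (by norm_num : -(2⁻¹:ℝ) ≠ 0)]
    · have hupos : (0:ℝ) < |x - 1/2| := abs_pos.2 (sub_ne_zero.2 hx2)
      have := log_abs_le (by norm_num : (0:ℝ) < 2⁻¹) hupos (habs_le x hx)
      simpa using this
  have hL : IntegrableOn (fun x => Real.log |x - 1/2|) (Icc (0:ℝ) 1) volume :=
    intOn_bound mlog.aestronglyMeasurable (by norm_num : (2⁻¹:ℝ) < 1) boundL
  have boundG : ∀ x ∈ Icc (0:ℝ) 1,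
      abs (Real.log (1 - b * Real.log |x - 1/2|)) ≤ (2*b) * |x - 1/2| ^ (-(2⁻¹:ℝ)) := by
    intro x hx
    by_cases hx2 : x = (1/2:ℝ)
    · simp [hx2, Real.zero_rpow (by norm_num : -(2⁻¹:ℝ) ≠ 0)]
    · have hupos : (0:ℝ) < |x - 1/2| := abs_pos.2 (sub_ne_zero.2 hx2)
      have hln : Real.log |x - 1/2| ≤ 0 := Real.log_nonpos hupos.le (habs_le x hx)
      have hQ : (0:ℝ) < 1 - b * Real.log |x - 1/2| := by nlinarith
      have h1 : Real.log (1 - b * Real.log |x - 1/2|) ≤ - b * Real.log |x - 1/2| := by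
        have := Real.log_le_sub_one_of_pos hQ; linarith
      have h0 : (0:ℝ) ≤ Real.log (1 - b * Real.log |x - 1/2|) :=
        Real.log_nonneg (by nlinarith)
      have h2 := log_abs_le (by norm_num : (0:ℝ) < 2⁻¹) hupos (habs_le x hx)
      rw [abs_of_nonpos hln] at h2
      rw [abs_of_nonneg h0]
      have h3 : -Real.log |x - 1/2| ≤ 2 * |x - 1/2| ^ (-(2⁻¹:ℝ)) := by
        simpa using h2
      nlinarith
  have hG2 : IntegrableOn (fun x => Real.log (1 - b * Real.log |x - 1/2|))
      (Icc (0:ℝ) 1) volume :=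
    intOn_bound mG.aestronglyMeasurable (by norm_num : (2⁻¹:ℝ) < 1) boundG
  have hconst : IntegrableOn (fun _ : ℝ => Real.log C) (Icc (0:ℝ) 1) volume := by
    refine integrableOn_const ?_
    exact measure_Icc_lt_top.ne
  have hrest : IntegrableOn (fun x => Real.log C + (-b - 1) * Real.log |x - 1/2|
      + Real.log (1 - b * Real.log |x - 1/2|)) (Icc (0:ℝ) 1) volume := by
    have := (hconst.add (hL.const_mul (-b - 1))).add hG2
    exact this.congr (Filter.EventuallyEq.of_eq rfl)
  show Integrable (fun x => Real.log |deriv f x|) (volume.restrict (Icc (0:ℝ) 1)) ↔ b < 1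
  rw [integrable_congr hae]
  constructor
  · intro h
    by_contra hb1
    push_neg at hb1
    apply keyNot hb1
    have heq : (fun x => |x - 1/2| ^ (-b) * Real.log |x - 1/2|)
        = fun x => F x - (Real.log C + (-b - 1) * Real.log |x - 1/2|
          + Real.log (1 - b * Real.log |x - 1/2|)) := by
      funext x; rw [hF_def]; ring
    show Integrable _ (volume.restrict (Icc (0:ℝ) 1))
    rw [heq]
    exact h.sub hrest
  · intro hb1
    set ε : ℝ := (1 - b) / 2 with hε_def
    have hε : (0:ℝ) < ε := by rw [hε_def]; linarith
    have hc : b + ε < 1 := by rw [hε_def]; linarith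
    have boundT : ∀ x ∈ Icc (0:ℝ) 1,
        abs (|x - 1/2| ^ (-b) * Real.log |x - 1/2|) ≤ ε⁻¹ * |x - 1/2| ^ (-(b + ε)) := by
      intro x hx
      by_cases hx2 : x = (1/2:ℝ)
      · simp [hx2, Real.zero_rpow (neg_ne_zero.2 (by positivity : b + ε ≠ 0)),
          Real.zero_rpow (neg_ne_zero.2 hb.ne')]
        positivity
      · have hupos : (0:ℝ) < |x - 1/2| := abs_pos.2 (sub_ne_zero.2 hx2)
        have h2 := log_abs_le hε hupos (habs_le x hx)
        have hp : (0:ℝ) < |x - 1/2| ^ (-b) := Real.rpow_pos_of_pos hupos _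
        rw [abs_mul, abs_of_pos hp]
        calc |x - 1/2| ^ (-b) * abs (Real.log |x - 1/2|)
            ≤ |x - 1/2| ^ (-b) * (ε⁻¹ * |x - 1/2| ^ (-ε)) := by nlinarith [abs_nonneg (Real.log |x - 1/2|)]
          _ = ε⁻¹ * |x - 1/2| ^ (-(b + ε)) := by
              rw [show -(b + ε) = -b + -ε by ring, Real.rpow_add hupos]; ring
    have hT : IntegrableOn (fun x => |x - 1/2| ^ (-b) * Real.log |x - 1/2|)
        (Icc (0:ℝ) 1) volume := intOn_bound mT.aestronglyMeasurable hc boundT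
    have := (hconst.add hT).add ((hL.const_mul (-b - 1)).add hG2)
    refine (this.congr (Filter.EventuallyEq.of_eq ?_))
    funext x; rw [hF_def]; simp only [Pi.add_apply]; ring
end
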